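/- Suppose λ₁ ≤ ρ < (λ₁+λ₂)/2. Then for any nonzero vectors x₁ and x₂ with f(x₁) ≤ ρ and f(x₂) ≤ ρ, one has |x₁ᵀM x₂| ≥ (1 − 2(ρ−λ₁)/(λ₂−λ₁))·‖x₁‖_M·‖x₂‖_M, and the right-hand side is strictly positive. -/

import Mathlib

open Matrix

lemma key_sqrt (a b : ℝ) (ha : 0 ≤ a) (hb : 0 ≤ b) (ha' : a ≤ 1/2) (hb' : b ≤ 1/2) :
    1 - a - b ≤ Real.sqrt ((1-a)*(1-b)) - Real.sqrt (a*b) := by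
  set s := Real.sqrt ((1-a)*(1-b)) with hsdef
  set t := Real.sqrt (a*b) with htdef
  have hs0 : 0 ≤ s := Real.sqrt_nonneg _
  have ht0 : 0 ≤ t := Real.sqrt_nonneg _
  have hs2 : s^2 = (1-a)*(1-b) := Real.sq_sqrt (by nlinarith)
  have ht2 : t^2 = a*b := Real.sq_sqrt (by positivity)
  have hst2 : (s*t)^2 = (a*b)*((1-a)*(1-b)) := by rw [mul_pow, hs2, ht2]; ring
  have hab : 0 ≤ a + b - 2*(a*b) := by nlinarith
  have h2st : 2*(s*t) ≤ a + b - 2*(a*b) := by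
    nlinarith [sq_nonneg (a-b), mul_nonneg hs0 ht0]
  have hsum : s + t ≤ 1 := by nlinarith
  have hst : t ≤ s := by nlinarith
  nlinarith [mul_nonneg (sub_nonneg.2 hst) (sub_nonneg.2 hsum)]

lemma scalar_main (ε p q P Q ip : ℝ) (hε : ε < 1/2)
    (hP : 0 < P) (hQ : 0 < Q) (hp0 : 0 ≤ p) (hq0 : 0 ≤ q)
    (hp : p ≤ ε * P) (hq : q ≤ ε * Q)
    (hip : Real.sqrt ((P - p)*(Q - q)) - Real.sqrt p * Real.sqrt q ≤ ip) :
    (1 - 2*ε) * Real.sqrt P * Real.sqrt Q ≤ ip := by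
  set a := p / P with hadef
  set b := q / Q with hbdef
  have ha0 : 0 ≤ a := div_nonneg hp0 hP.le
  have hb0 : 0 ≤ b := div_nonneg hq0 hQ.le
  have ha : a ≤ ε := (div_le_iff₀ hP).2 hp
  have hb : b ≤ ε := (div_le_iff₀ hQ).2 hq
  have key := key_sqrt a b ha0 hb0 (by linarith) (by linarith)
  have hPQ : 0 < Real.sqrt P * Real.sqrt Q := by positivity
  have hPp : P - p = (1-a)*P := by rw [hadef]; field_simp
  have hQq : Q - q = (1-b)*Q := by rw [hbdef]; field_simp
  have hX : (0:ℝ) ≤ (1-a)*(1-b) := by nlinarith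
  have e1 : Real.sqrt ((1-a)*(1-b)) * (Real.sqrt P * Real.sqrt Q)
      = Real.sqrt ((P-p)*(Q-q)) := by
    rw [← Real.sqrt_mul hP.le, ← Real.sqrt_mul hX]
    congr 1
    rw [hPp, hQq]; ring
  have e2 : Real.sqrt (a*b) * (Real.sqrt P * Real.sqrt Q)
      = Real.sqrt p * Real.sqrt q := by
    rw [← Real.sqrt_mul hP.le, ← Real.sqrt_mul (mul_nonneg ha0 hb0), ← Real.sqrt_mul hp0]
    congr 1
    rw [hadef, hbdef]; field_simp
  have step : (1 - 2*ε) * Real.sqrt P * Real.sqrt Q ≤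
      (Real.sqrt ((1-a)*(1-b)) - Real.sqrt (a*b)) * (Real.sqrt P * Real.sqrt Q) := by
    rw [mul_assoc]
    apply mul_le_mul_of_nonneg_right _ hPQ.le
    linarith
  calc (1 - 2*ε) * Real.sqrt P * Real.sqrt Q
      ≤ (Real.sqrt ((1-a)*(1-b)) - Real.sqrt (a*b)) * (Real.sqrt P * Real.sqrt Q) := step
    _ = Real.sqrt ((P-p)*(Q-q)) - Real.sqrt p * Real.sqrt q := by rw [sub_mul, e1, e2]
    _ ≤ ip := hip

lemma tail_bound {m : ℕ} (lam : Fin (m+2) → ℝ) (hmono : Monotone lam)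
    (c : Fin (m+2) → ℝ) (ρ : ℝ)
    (hf : ∑ i, lam i * (c i)^2 ≤ ρ * ∑ i, (c i)^2) :
    (lam 1 - lam 0) * (∑ i : Fin (m+1), (c i.succ)^2) ≤ (ρ - lam 0) * ∑ i, (c i)^2 := by
  have h1 : ∑ i, (lam i - lam 0) * (c i)^2 ≤ (ρ - lam 0) * ∑ i, (c i)^2 := by
    have : ∑ i, (lam i - lam 0) * (c i)^2
        = (∑ i, lam i * (c i)^2) - lam 0 * ∑ i, (c i)^2 := by
      rw [Finset.mul_sum, ← Finset.sum_sub_distrib]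
      exact Finset.sum_congr rfl fun i _ => by ring
    rw [this]; linarith
  have h2 : (lam 1 - lam 0) * (∑ i : Fin (m+1), (c i.succ)^2)
      ≤ ∑ i : Fin (m+1), (lam i.succ - lam 0) * (c i.succ)^2 := by
    rw [Finset.mul_sum]
    apply Finset.sum_le_sum
    intro i _
    have h1i : lam 1 ≤ lam i.succ := by
      apply hmono
      rw [Fin.le_def]
      simp [Fin.val_one]
    nlinarith [sq_nonneg (c i.succ)]
  have h3 : ∑ i : Fin (m+1), (lam i.succ - lam 0) * (c i.succ)^2
      ≤ ∑ i, (lam i - lam 0) * (c i)^2 := by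
    rw [show (∑ i, (lam i - lam 0) * (c i)^2)
      = (lam 0 - lam 0) * (c 0)^2 + ∑ i : Fin (m+1), (lam i.succ - lam 0) * (c i.succ)^2
      from Fin.sum_univ_succ _]
    simp
  linarith

lemma matrix_setup {m : ℕ} (A M : Matrix (Fin m) (Fin m) ℝ)
    (hAs : Aᵀ = A) (hMs : Mᵀ = M)
    (lam : Fin m → ℝ) (u : Fin m → (Fin m → ℝ))
    (heig : ∀ i, A *ᵥ u i = lam i • (M *ᵥ u i))
    (horth : ∀ i j, u i ⬝ᵥ M *ᵥ u j = if i = j then 1 else 0) :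
    ∃ V : Matrix (Fin m) (Fin m) ℝ, Vᵀ * V = M ∧ Vᵀ * Matrix.diagonal lam * V = A := by
  set U : Matrix (Fin m) (Fin m) ℝ := Matrix.of u with hU
  have h1 : U * M * Uᵀ = 1 := by
    ext i j
    have : (U * M * Uᵀ) i j = (u i ᵥ* M) ⬝ᵥ u j := by
      simp [Matrix.mul_apply, dotProduct, Matrix.vecMul, Finset.sum_mul, hU]
    rw [this]
    have : u i ᵥ* M = M *ᵥ u i := by
      have h := Matrix.vecMul_transpose M (u i)
      rw [hMs] at h; exact h
    rw [this, dotProduct_comm, horth j i, Matrix.one_apply]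
    simp [eq_comm]
  have h3 : U * A * Uᵀ = Matrix.diagonal lam := by
    ext i j
    have e : (U * A * Uᵀ) i j = (u i ᵥ* A) ⬝ᵥ u j := by
      simp [Matrix.mul_apply, dotProduct, Matrix.vecMul, Finset.sum_mul, hU]
    rw [e]
    have : u i ᵥ* A = A *ᵥ u i := by
      have h := Matrix.vecMul_transpose A (u i)
      rw [hAs] at h; exact h
    rw [this, dotProduct_comm, heig i, dotProduct_smul, horth j i,
      Matrix.diagonal_apply]
    rcases eq_or_ne i j with h | h
    · simp [h]
    · simp [h, Ne.symm h]
  have h2 : Uᵀ * (U * M) = 1 := mul_eq_one_comm.mp h1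
  have hMUU : M * (Uᵀ * U) = 1 := by
    have h := congrArg Matrix.transpose h2
    simp only [Matrix.transpose_mul, Matrix.transpose_one, Matrix.transpose_transpose,
      hMs] at h
    rw [← Matrix.mul_assoc]; exact h
  refine ⟨U * M, ?_, ?_⟩
  · rw [Matrix.transpose_mul, hMs, Matrix.mul_assoc, h2, Matrix.mul_one]
  · rw [← h3]
    simp only [Matrix.transpose_mul, hMs, Matrix.mul_assoc]
    rw [h2, Matrix.mul_one]
    calc M * (Uᵀ * (U * A)) = (M * (Uᵀ * U)) * A := by simp only [Matrix.mul_assoc]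
      _ = A := by rw [hMUU, Matrix.one_mul]

/-- Near-parallelism of vectors with small Rayleigh quotient. -/
theorem statement_2 {n : ℕ}
    (A M : Matrix (Fin (n+2)) (Fin (n+2)) ℝ)
    (hA : A.PosDef) (hM : M.PosDef)
    (lam : Fin (n+2) → ℝ) (u : Fin (n+2) → (Fin (n+2) → ℝ))
    (hlam_pos : 0 < lam 0) (hgap : lam 0 < lam 1) (hmono : Monotone lam)
    (heig : ∀ i, A *ᵥ u i = lam i • (M *ᵥ u i))
    (horth : ∀ i j, u i ⬝ᵥ M *ᵥ u j = if i = j then 1 else 0)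
    (ρ : ℝ) (hρ1 : lam 0 ≤ ρ) (hρ2 : ρ < (lam 0 + lam 1) / 2)
    (x₁ x₂ : Fin (n+2) → ℝ) (hx₁ : x₁ ≠ 0) (hx₂ : x₂ ≠ 0)
    (hf₁ : (x₁ ⬝ᵥ A *ᵥ x₁) / (x₁ ⬝ᵥ M *ᵥ x₁) ≤ ρ)
    (hf₂ : (x₂ ⬝ᵥ A *ᵥ x₂) / (x₂ ⬝ᵥ M *ᵥ x₂) ≤ ρ) :
    (1 - 2 * (ρ - lam 0) / (lam 1 - lam 0)) *
        Real.sqrt (x₁ ⬝ᵥ M *ᵥ x₁) * Real.sqrt (x₂ ⬝ᵥ M *ᵥ x₂) ≤ |x₁ ⬝ᵥ M *ᵥ x₂| ∧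
      0 < (1 - 2 * (ρ - lam 0) / (lam 1 - lam 0)) *
        Real.sqrt (x₁ ⬝ᵥ M *ᵥ x₁) * Real.sqrt (x₂ ⬝ᵥ M *ᵥ x₂) := by
  have hAs : Aᵀ = A := by have := hA.1; simpa [Matrix.IsHermitian] using this
  have hMs : Mᵀ = M := by have := hM.1; simpa [Matrix.IsHermitian] using this
  obtain ⟨V, hVM, hVA⟩ := matrix_setup A M hAs hMs lam u heig horth
  have hMdot : ∀ x y, x ⬝ᵥ M *ᵥ y = (V *ᵥ x) ⬝ᵥ (V *ᵥ y) := by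
    intro x y
    rw [← hVM, ← Matrix.mulVec_mulVec, Matrix.dotProduct_mulVec, Matrix.vecMul_transpose]
  have hAdot : ∀ x, x ⬝ᵥ A *ᵥ x = ∑ i, lam i * ((V *ᵥ x) i)^2 := by
    intro x
    rw [← hVA, Matrix.mul_assoc, ← Matrix.mulVec_mulVec, Matrix.dotProduct_mulVec,
      Matrix.vecMul_transpose, ← Matrix.mulVec_mulVec]
    simp only [dotProduct, Matrix.mulVec_diagonal]
    exact Finset.sum_congr rfl fun i _ => by ring
  set c := V *ᵥ x₁ with hc
  set d := V *ᵥ x₂ with hd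
  set P := ∑ i, (c i)^2 with hPdef
  set Q := ∑ i, (d i)^2 with hQdef
  have hPc : x₁ ⬝ᵥ M *ᵥ x₁ = P := by rw [hMdot]; simp [dotProduct, hPdef, pow_two]; rfl
  have hQd : x₂ ⬝ᵥ M *ᵥ x₂ = Q := by rw [hMdot]; simp [dotProduct, hQdef, pow_two]; rfl
  have hP : 0 < P := by rw [← hPc]; exact hM.dotProduct_mulVec_pos hx₁
  have hQ : 0 < Q := by rw [← hQd]; exact hM.dotProduct_mulVec_pos hx₂
  have hRa : ∑ i, lam i * (c i)^2 ≤ ρ * P := by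
    have := (div_le_iff₀ (by rw [hPc]; exact hP)).mp hf₁
    rw [hAdot, hPc] at this
    linarith
  have hRb : ∑ i, lam i * (d i)^2 ≤ ρ * Q := by
    have := (div_le_iff₀ (by rw [hQd]; exact hQ)).mp hf₂
    rw [hAdot, hQd] at this
    linarith
  set p := ∑ i : Fin (n+1), (c i.succ)^2 with hpdef
  set q := ∑ i : Fin (n+1), (d i.succ)^2 with hqdef
  have hp0 : 0 ≤ p := Finset.sum_nonneg fun i _ => sq_nonneg _
  have hq0 : 0 ≤ q := Finset.sum_nonneg fun i _ => sq_nonneg _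
  have hgappos : 0 < lam 1 - lam 0 := by linarith
  set ε := (ρ - lam 0) / (lam 1 - lam 0) with hεdef
  have hε : ε < 1/2 := by
    rw [hεdef, div_lt_iff₀ hgappos]; linarith
  have hp : p ≤ ε * P := by
    have hb := tail_bound lam hmono c ρ hRa
    rw [hεdef, div_mul_eq_mul_div, le_div_iff₀ hgappos]
    nlinarith
  have hq : q ≤ ε * Q := by
    have hb := tail_bound lam hmono d ρ hRb
    rw [hεdef, div_mul_eq_mul_div, le_div_iff₀ hgappos]
    nlinarith
  have hPsplit : P = (c 0)^2 + p := Fin.sum_univ_succ _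
  have hQsplit : Q = (d 0)^2 + q := Fin.sum_univ_succ _
  set T := ∑ i : Fin (n+1), c i.succ * d i.succ with hTdef
  have hcd : x₁ ⬝ᵥ M *ᵥ x₂ = c 0 * d 0 + T := by
    rw [hMdot]
    simp only [dotProduct]
    exact Fin.sum_univ_succ _
  have hT : |T| ≤ Real.sqrt p * Real.sqrt q := by
    have hcs : T^2 ≤ p * q := Finset.sum_mul_sq_le_sq_mul_sq Finset.univ _ _
    calc |T| = Real.sqrt (T^2) := (Real.sqrt_sq_eq_abs T).symm
      _ ≤ Real.sqrt (p * q) := Real.sqrt_le_sqrt hcs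
      _ = Real.sqrt p * Real.sqrt q := Real.sqrt_mul hp0 _
  have h0 : |c 0 * d 0| = Real.sqrt ((P - p) * (Q - q)) := by
    rw [← Real.sqrt_sq_eq_abs]
    congr 1
    have : (c 0)^2 = P - p := by linarith
    have h2 : (d 0)^2 = Q - q := by linarith
    rw [mul_pow, this, h2]
  have hip : Real.sqrt ((P - p) * (Q - q)) - Real.sqrt p * Real.sqrt q
      ≤ |x₁ ⬝ᵥ M *ᵥ x₂| := by
    rw [hcd, ← h0]
    have h1 := abs_sub_abs_le_abs_sub (c 0 * d 0) (-T)
    rw [abs_neg, sub_neg_eq_add] at h1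
    linarith
  have main := scalar_main ε p q P Q _ hε hP hQ hp0 hq0 hp hq hip
  have hcoef : 1 - 2 * (ρ - lam 0) / (lam 1 - lam 0) = 1 - 2 * ε := by
    rw [hεdef]; ring
  constructor
  · rw [hcoef, hPc, hQd]; exact main
  · rw [hcoef, hPc, hQd]
    have h1 : 0 < 1 - 2 * ε := by linarith
    exact mul_pos (mul_pos h1 (Real.sqrt_pos.2 hP)) (Real.sqrt_pos.2 hQ)
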